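/- Let Â_x = (τ_0 σ_z + τ_1(−1)^x σ_x)/√(τ_0² + τ_1²) and B̂_y = (1−y)σ_z + y·σ_x, and let ρ have diagonal correlation matrix with Tr[(σ_z⊗σ_z)ρ] = τ_0, Tr[(σ_x⊗σ_x)ρ] = τ_1 and vanishing cross terms. Then Tr[((Â_0 + (−1)^y Â_1) ⊗ B̂_y) ρ] = (2/√(τ_0² + τ_1²))·(τ_0²(1−y) + τ_1² y) for y ∈ {0,1}, and summing over y yields the CHSH score 2√(τ_0² + τ_1²). -/

import Mathlib

open Matrix Kronecker

noncomputable def σx : Matrix (Fin 2) (Fin 2) ℂ := !![0, 1; 1, 0]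
noncomputable def σz : Matrix (Fin 2) (Fin 2) ℂ := !![1, 0; 0, -1]

/-- Alternative optimal CHSH observables of Eq. (9): `Â x = (τ₀ σz + τ₁ (-1)^x σx)/√(τ₀²+τ₁²)`. -/
noncomputable def Ahat (τ₀ τ₁ : ℝ) (x : Fin 2) : Matrix (Fin 2) (Fin 2) ℂ :=
  ((τ₀ / Real.sqrt (τ₀ ^ 2 + τ₁ ^ 2) : ℝ) : ℂ) • σz +
    ((τ₁ * (-1 : ℝ) ^ (x : ℕ) / Real.sqrt (τ₀ ^ 2 + τ₁ ^ 2) : ℝ) : ℂ) • σx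

/-- `B̂ y = (1-y)σz + y σx`. -/
noncomputable def Bhat (y : Fin 2) : Matrix (Fin 2) (Fin 2) ℂ :=
  ((1 - (y : ℕ) : ℝ) : ℂ) • σz + (((y : ℕ) : ℝ) : ℂ) • σx

theorem alternative_optimal_chsh_observables
    (τ₀ τ₁ : ℝ) (h1 : 0 ≤ τ₁) (h2 : τ₁ ≤ τ₀) (hpos : 0 < τ₀ ^ 2 + τ₁ ^ 2)
    (ρ : Matrix (Fin 2 × Fin 2) (Fin 2 × Fin 2) ℂ)
    (hzz : ((σz ⊗ₖ σz) * ρ).trace = ((τ₀ : ℝ) : ℂ))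
    (hxx : ((σx ⊗ₖ σx) * ρ).trace = ((τ₁ : ℝ) : ℂ))
    (hzx : ((σz ⊗ₖ σx) * ρ).trace = 0)
    (hxz : ((σx ⊗ₖ σz) * ρ).trace = 0) :
    (∀ y : Fin 2,
      (((Ahat τ₀ τ₁ 0 + ((-1 : ℂ) ^ (y : ℕ)) • Ahat τ₀ τ₁ 1) ⊗ₖ Bhat y) * ρ).trace =
        ((2 / Real.sqrt (τ₀ ^ 2 + τ₁ ^ 2) *
            (τ₀ ^ 2 * (1 - (y : ℕ)) + τ₁ ^ 2 * (y : ℕ)) : ℝ) : ℂ)) ∧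
    ∑ y : Fin 2,
        (((Ahat τ₀ τ₁ 0 + ((-1 : ℂ) ^ (y : ℕ)) • Ahat τ₀ τ₁ 1) ⊗ₖ Bhat y) * ρ).trace =
      ((2 * Real.sqrt (τ₀ ^ 2 + τ₁ ^ 2) : ℝ) : ℂ) := by
  set s := Real.sqrt (τ₀ ^ 2 + τ₁ ^ 2) with hs
  have hspos : 0 < s := Real.sqrt_pos.mpr hpos
  have hs2 : (s : ℝ) ^ 2 = τ₀ ^ 2 + τ₁ ^ 2 := Real.sq_sqrt hpos.le
  have key : ∀ (a b c d : ℂ),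
      ((((a • σz + b • σx)) ⊗ₖ (c • σz + d • σx) * ρ)).trace
        = a * c * (τ₀ : ℂ) + b * d * (τ₁ : ℂ) := by
    intro a b c d
    rw [Matrix.add_kronecker, Matrix.kronecker_add, Matrix.kronecker_add,
      Matrix.smul_kronecker, Matrix.smul_kronecker, Matrix.smul_kronecker,
      Matrix.smul_kronecker, Matrix.kronecker_smul, Matrix.kronecker_smul,
      Matrix.kronecker_smul, Matrix.kronecker_smul]
    simp only [Matrix.add_mul, Matrix.smul_mul, Matrix.trace_add, Matrix.trace_smul,
      hzz, hxx, hzx, hxz, smul_eq_mul, smul_zero, mul_zero, add_zero, zero_add]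
    ring
  have main : ∀ y : Fin 2,
      (((Ahat τ₀ τ₁ 0 + ((-1 : ℂ) ^ (y : ℕ)) • Ahat τ₀ τ₁ 1) ⊗ₖ Bhat y) * ρ).trace =
        ((2 / s * (τ₀ ^ 2 * (1 - (y : ℕ)) + τ₁ ^ 2 * (y : ℕ)) : ℝ) : ℂ) := by
    intro y
    have hA : (Ahat τ₀ τ₁ 0 + ((-1 : ℂ) ^ (y : ℕ)) • Ahat τ₀ τ₁ 1)
        = (((τ₀ / s + (-1:ℝ) ^ (y:ℕ) * (τ₀ / s) : ℝ) : ℂ)) • σz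
          + (((τ₁ / s - (-1:ℝ) ^ (y:ℕ) * (τ₁ / s) : ℝ) : ℂ)) • σx := by
      simp only [Ahat, Fin.val_zero, Fin.val_one, pow_zero, pow_one, smul_add, smul_smul]
      push_cast
      rw [← hs]
      module
    rw [hA, Bhat, key]
    push_cast
    fin_cases y <;> simp <;> field_simp <;> ring
  exact ⟨main, by
    rw [Fin.sum_univ_two, main 0, main 1]
    push_cast
    simp only [Fin.val_zero, Fin.val_one]
    push_cast
    have : (s:ℂ) ≠ 0 := by exact_mod_cast hspos.ne'
    field_simp
    have : ((τ₀:ℂ)^2 + (τ₁:ℂ)^2) = (s:ℂ)^2 := by exact_mod_cast hs2.symm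
    linear_combination this⟩
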